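/- Let V be an n×n complex matrix and v > 0 a real number with V·V = v²·I_n, and let A, B be arbitrary n×n complex matrices. Define f : ℝ → ℂ by f(θ) = Tr(A · exp(−i·θ·V) · B · exp(i·θ·V)), where exp is the matrix exponential and i is the imaginary unit. Then f is differentiable and satisfies the exact parameter-shift rule: for every θ ∈ ℝ, f′(θ) = v·( f(θ + π/(4v)) − f(θ − π/(4v)) ). -/

import Mathlib

open Matrix NormedSpace

lemma psr_exp_eq {n : ℕ} (V : Matrix (Fin n) (Fin n) ℂ) (v : ℝ) (hv : 0 < v)
    (hV : V * V = ((v : ℂ) ^ 2) • (1 : Matrix (Fin n) (Fin n) ℂ)) (z : ℂ) :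
    exp ((z * Complex.I) • V) =
      Complex.cos ((v : ℂ) * z) • (1 : Matrix (Fin n) (Fin n) ℂ) +
      (Complex.I * (Complex.sin ((v : ℂ) * z) / v)) • V := by
  have hvne : (v : ℂ) ≠ 0 := by exact_mod_cast hv.ne'
  have hpow_even : ∀ k : ℕ, V ^ (2 * k) = ((v : ℂ) ^ (2 * k)) • (1 : Matrix (Fin n) (Fin n) ℂ) := by
    intro k
    rw [pow_mul, sq, hV, smul_pow, one_pow, ← pow_mul]
  have hpow_odd : ∀ k : ℕ, V ^ (2 * k + 1) = ((v : ℂ) ^ (2 * k)) • V := by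
    intro k
    rw [pow_succ, hpow_even, smul_mul_assoc, one_mul]
  rw [exp_eq_tsum ℂ]
  refine HasSum.tsum_eq ?_
  have hc := (Complex.hasSum_cos ((v : ℂ) * z)).smul_const (1 : Matrix (Fin n) (Fin n) ℂ)
  have hs := (((Complex.hasSum_sin ((v : ℂ) * z)).div_const (v : ℂ)).mul_left
      Complex.I).smul_const V
  refine HasSum.even_add_odd ?_ ?_
  · convert hc using 2 with k
    case e'_3 => rfl
    rw [smul_pow, hpow_even, smul_smul, smul_smul]
    congr 1
    have h1 : (z * Complex.I) ^ (2 * k) = (-1 : ℂ) ^ k * z ^ (2 * k) := by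
      rw [mul_pow, pow_mul Complex.I, Complex.I_sq]; ring
    rw [h1]
    field_simp
    ring
  · convert hs using 2 with k
    case e'_3 => rfl
    rw [smul_pow, hpow_odd, smul_smul, smul_smul]
    congr 1
    have h1 : (z * Complex.I) ^ (2 * k + 1) = Complex.I * ((-1 : ℂ) ^ k * z ^ (2 * k + 1)) := by
      rw [mul_pow, pow_succ Complex.I, pow_mul Complex.I, Complex.I_sq]; ring
    have hfac : (((2 * k + 1).factorial : ℕ) : ℂ) ≠ 0 := by
      exact_mod_cast Nat.factorial_ne_zero (2 * k + 1)
    rw [h1, mul_pow]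
    field_simp
    ring

/-- **Exact parameter-shift rule.** Let `V` be an `n × n` complex matrix with `V·V = v²·I`
for some real `v > 0`, and let `A`, `B` be arbitrary `n × n` complex matrices. Then
`f(θ) = Tr (A · exp(−iθV) · B · exp(iθV))` is differentiable with
`f′(θ) = v·(f(θ + π/(4v)) − f(θ − π/(4v)))` for every `θ`. -/
theorem parameter_shift_rule (n : ℕ)
    (V A B : Matrix (Fin n) (Fin n) ℂ)
    (v : ℝ) (hv : 0 < v)
    (hV : V * V = ((v : ℂ) ^ 2) • (1 : Matrix (Fin n) (Fin n) ℂ)) :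
    ∀ θ : ℝ,
      HasDerivAt
        (fun θ : ℝ =>
          (A * exp ((-(θ : ℂ) * Complex.I) • V) * B *
            exp (((θ : ℂ) * Complex.I) • V)).trace)
        ((v : ℂ) *
          ((A * exp ((-(((θ + Real.pi / (4 * v)) : ℝ) : ℂ) * Complex.I) • V) * B *
              exp (((((θ + Real.pi / (4 * v)) : ℝ) : ℂ) * Complex.I) • V)).trace -
           (A * exp ((-(((θ - Real.pi / (4 * v)) : ℝ) : ℂ) * Complex.I) • V) * B *
              exp (((((θ - Real.pi / (4 * v)) : ℝ) : ℂ) * Complex.I) • V)).trace))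
        θ := by
  have hvne : (v : ℂ) ≠ 0 := by exact_mod_cast hv.ne'
  have hvne' : v ≠ 0 := hv.ne'
  set T0 := (A * B).trace with hT0
  set T1 := (A * B * V).trace with hT1
  set T2 := (A * V * B).trace with hT2
  set T3 := (A * V * B * V).trace with hT3
  have hf : ∀ ψ : ℝ,
      (A * exp ((-(ψ : ℂ) * Complex.I) • V) * B *
          exp (((ψ : ℂ) * Complex.I) • V)).trace =
        Complex.cos ((v : ℂ) * ψ) * Complex.cos ((v : ℂ) * ψ) * T0 +
          Complex.I / v * (Complex.cos ((v : ℂ) * ψ) * Complex.sin ((v : ℂ) * ψ)) * (T1 - T2) +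
          Complex.sin ((v : ℂ) * ψ) * Complex.sin ((v : ℂ) * ψ) / (v : ℂ) ^ 2 * T3 := by
    intro ψ
    have e1 := psr_exp_eq V v hv hV (-(ψ : ℂ))
    have e2 := psr_exp_eq V v hv hV (ψ : ℂ)
    rw [mul_neg, Complex.cos_neg, Complex.sin_neg] at e1
    rw [e1, e2]
    simp only [mul_add, add_mul, Matrix.mul_smul, Matrix.smul_mul, Matrix.mul_one,
      trace_add, trace_smul, smul_eq_mul, mul_one, neg_div, neg_smul, mul_neg, neg_mul,
      Matrix.mul_neg, Matrix.neg_mul, trace_neg, ← mul_assoc]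
    rw [hT0, hT1, hT2, hT3]
    have hI : Complex.I ^ 2 = -1 := Complex.I_sq
    field_simp
    ring_nf
    rw [Complex.I_sq]
    ring
  intro θ
  simp only [hf]
  have hC : HasDerivAt (fun ψ : ℝ => Complex.cos ((v : ℂ) * ψ))
      (-Complex.sin ((v : ℂ) * θ) * v) θ := by
    have h1 : HasDerivAt (fun z : ℂ => (v : ℂ) * z) (v : ℂ) ((θ : ℝ) : ℂ) := by
      simpa using (hasDerivAt_id ((θ : ℝ) : ℂ)).const_mul (v : ℂ)
    have h2 := (Complex.hasDerivAt_cos ((v : ℂ) * ((θ : ℝ) : ℂ))).comp ((θ : ℝ) : ℂ) h1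
    simpa [Function.comp] using h2.comp_ofReal
  have hS : HasDerivAt (fun ψ : ℝ => Complex.sin ((v : ℂ) * ψ))
      (Complex.cos ((v : ℂ) * θ) * v) θ := by
    have h1 : HasDerivAt (fun z : ℂ => (v : ℂ) * z) (v : ℂ) ((θ : ℝ) : ℂ) := by
      simpa using (hasDerivAt_id ((θ : ℝ) : ℂ)).const_mul (v : ℂ)
    have h2 := (Complex.hasDerivAt_sin ((v : ℂ) * ((θ : ℝ) : ℂ))).comp ((θ : ℝ) : ℂ) h1
    simpa [Function.comp] using h2.comp_ofReal
  set c := Complex.cos ((v : ℂ) * θ) with hc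
  set s := Complex.sin ((v : ℂ) * θ) with hs
  have hD : HasDerivAt
      (fun ψ : ℝ =>
        Complex.cos ((v : ℂ) * ψ) * Complex.cos ((v : ℂ) * ψ) * T0 +
          Complex.I / v * (Complex.cos ((v : ℂ) * ψ) * Complex.sin ((v : ℂ) * ψ)) * (T1 - T2) +
          Complex.sin ((v : ℂ) * ψ) * Complex.sin ((v : ℂ) * ψ) / (v : ℂ) ^ 2 * T3)
      (((-s * v) * c + c * (-s * v)) * T0 +
        Complex.I / v * (-s * v * s + c * (c * v)) * (T1 - T2) +
        ((c * v) * s + s * (c * v)) / (v : ℂ) ^ 2 * T3) θ := by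
    exact (((hC.mul hC).mul_const T0).add
      (((hC.mul hS).const_mul (Complex.I / (v : ℂ))).mul_const (T1 - T2))).add
      (((hS.mul hS).div_const ((v : ℂ) ^ 2)).mul_const T3)
  convert hD using 1
  -- now prove the shift identity
  have hplus : (v : ℂ) * ((θ + Real.pi / (4 * v) : ℝ) : ℂ) =
      (v : ℂ) * θ + (Real.pi : ℂ) / 4 := by
    push_cast
    field_simp
  have hminus : (v : ℂ) * ((θ - Real.pi / (4 * v) : ℝ) : ℂ) =
      (v : ℂ) * θ - (Real.pi : ℂ) / 4 := by
    push_cast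
    field_simp
  rw [hplus, hminus, Complex.cos_add, Complex.sin_add, Complex.cos_sub, Complex.sin_sub]
  have hpi4 : ((Real.pi : ℂ) / 4) = ((Real.pi / 4 : ℝ) : ℂ) := by push_cast; ring
  have hcp : Complex.cos ((Real.pi : ℂ) / 4) = ((Real.sqrt 2 / 2 : ℝ) : ℂ) := by
    rw [hpi4, ← Complex.ofReal_cos, Real.cos_pi_div_four]
  have hsp : Complex.sin ((Real.pi : ℂ) / 4) = ((Real.sqrt 2 / 2 : ℝ) : ℂ) := by
    rw [hpi4, ← Complex.ofReal_sin, Real.sin_pi_div_four]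
  rw [hcp, hsp]
  set u : ℂ := ((Real.sqrt 2 / 2 : ℝ) : ℂ) with hu
  have hu2 : u ^ 2 = 1 / 2 := by
    have h2 : (Real.sqrt 2 / 2 : ℝ) ^ 2 = 1 / 2 := by
      rw [div_pow, Real.sq_sqrt (by norm_num : (0:ℝ) ≤ 2)]
      norm_num
    rw [hu, ← Complex.ofReal_pow, h2]
    norm_num
  rw [← hc, ← hs]
  linear_combination (2 * (v : ℂ) * (-2 * c * s * T0 + (c ^ 2 - s ^ 2) * Complex.I / v * (T1 - T2)
      + 2 * c * s * T3 / (v : ℂ) ^ 2)) * hu2
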